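/- arXiv:1712.10167 — 2 statements merged into one kernel-verified Lean document; each statement's English description precedes it below -/
import Mathlib

section
/- Let G be a connected simple graph, let b be a bridge of G, and let G₁ and G₂ be the two connected components of G − b. Then tsp(G) = tsp(G₁) + tsp(G₂) + 2. -/
set_option maxHeartbeats 1000000


/-- `tsp G`: the minimum length (number of edge-traversals) of a closed walk in `G`
visiting every vertex of `G`. -/
noncomputable def tsp {V : Type*} (G : SimpleGraph V) : ℕ :=
  sInf {m : ℕ | ∃ (x : V) (w : G.Walk x x), (∀ u : V, u ∈ w.support) ∧ w.length = m}

namespace TspAux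

open SimpleGraph

variable {V : Type*}

lemma mem_supp_of_reach {G : SimpleGraph V} {u x : V} (h : G.Reachable u x) :
    x ∈ (G.connectedComponentMk u).supp := by
  rw [ConnectedComponent.mem_supp_iff]
  exact ConnectedComponent.eq.mpr h.symm

lemma reach_of_mem_supp {G : SimpleGraph V} {u x : V}
    (h : x ∈ (G.connectedComponentMk u).supp) : G.Reachable u x :=
  (ConnectedComponent.eq.mp ((ConnectedComponent.mem_supp_iff _ _).mp h)).symm

/-- A connected graph on a finite nonempty vertex type has a closed walk visiting
every vertex. -/
lemma exists_tour {G : SimpleGraph V} [Fintype V] [Nonempty V] (h : G.Connected) :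
    ∃ (x : V) (w : G.Walk x x), ∀ y : V, y ∈ w.support := by
  obtain ⟨x⟩ := ‹Nonempty V›
  suffices H : ∀ l : List V, ∃ w : G.Walk x x, ∀ y ∈ l, y ∈ w.support by
    obtain ⟨w, hw⟩ := H Finset.univ.toList
    exact ⟨x, w, fun y => hw y (by simp)⟩
  intro l
  induction l with
  | nil => exact ⟨Walk.nil, by simp⟩
  | cons y l ih =>
    obtain ⟨w, hw⟩ := ih
    obtain ⟨p⟩ := h.preconnected x y
    refine ⟨p.append (p.reverse.append w), fun z hz => ?_⟩
    rw [Walk.mem_support_append_iff]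
    rcases List.mem_cons.mp hz with rfl | hz
    · exact Or.inl p.end_mem_support
    · exact Or.inr (by rw [Walk.mem_support_append_iff]; exact Or.inr (hw z hz))

/-- A walk whose support stays in `s` gives reachability in the induced graph. -/
lemma walk_induce {G : SimpleGraph V} {s : Set V} :
    ∀ {a b : V} (w : G.Walk a b) (ha : a ∈ s) (hb : b ∈ s),
      (∀ x ∈ w.support, x ∈ s) → (G.induce s).Reachable ⟨a, ha⟩ ⟨b, hb⟩ := by
  intro a b w
  induction w with
  | nil => intro ha hb _; exact Reachable.refl _
  | @cons a c b h p ih =>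
    intro ha hb hs
    have hc : c ∈ s := hs c (by simp)
    have hadj : (G.induce s).Adj ⟨a, ha⟩ ⟨c, hc⟩ := by
      show G.Adj a c
      exact h
    exact hadj.reachable.trans (ih hc hb fun x hx => hs x (by simp [hx]))

open scoped Classical in
/-- Projection to the component of `u`. -/
noncomputable def proj (G : SimpleGraph V) (u x : V) :
    ↥(G.connectedComponentMk u).supp :=
  if h : G.Reachable u x then ⟨x, mem_supp_of_reach h⟩
  else ⟨u, mem_supp_of_reach (Reachable.refl u)⟩

lemma proj_val_pos {G : SimpleGraph V} {u x : V} (h : G.Reachable u x) :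
    (proj G u x : V) = x := by rw [proj, dif_pos h]

lemma proj_val_neg {G : SimpleGraph V} {u x : V} (h : ¬ G.Reachable u x) :
    (proj G u x : V) = u := by rw [proj, dif_neg h]

lemma length_rotate {G : SimpleGraph V} [DecidableEq V] {x y : V} (c : G.Walk x x) (h : y ∈ c.support) :
    (c.rotate _ h).length = c.length := by
  have h1 := congrArg Walk.length (c.take_spec h)
  rw [Walk.length_append] at h1
  rw [Walk.rotate, Walk.length_append]
  omega

lemma mem_support_rotate {G : SimpleGraph V} [DecidableEq V] {x y z : V} (c : G.Walk x x)
    (h : y ∈ c.support) : z ∈ (c.rotate _ h).support ↔ z ∈ c.support := by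
  rw [Walk.rotate, Walk.mem_support_append_iff]
  conv_rhs => rw [← c.take_spec h]
  rw [Walk.mem_support_append_iff]
  tauto

/-- The key decomposition: any walk in `G` projects to walks in the two components
of `G` minus the bridge, with an accounting of lengths. -/
lemma projection {G : SimpleGraph V} {u v : V}
    (hnr : ¬ (G.deleteEdges {s(u,v)}).Reachable u v)
    (htot : ∀ x, (G.deleteEdges {s(u,v)}).Reachable u x ∨
      (G.deleteEdges {s(u,v)}).Reachable v x)
    {a b : V} (w : G.Walk a b) :
    ∃ (p : ((G.deleteEdges {s(u,v)}).induce
              ((G.deleteEdges {s(u,v)}).connectedComponentMk u).supp).Walk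
            (proj (G.deleteEdges {s(u,v)}) u a) (proj (G.deleteEdges {s(u,v)}) u b))
      (q : ((G.deleteEdges {s(u,v)}).induce
              ((G.deleteEdges {s(u,v)}).connectedComponentMk v).supp).Walk
            (proj (G.deleteEdges {s(u,v)}) v a) (proj (G.deleteEdges {s(u,v)}) v b))
      (k : ℕ),
      p.length + q.length + k = w.length ∧
      (∀ x ∈ w.support, proj (G.deleteEdges {s(u,v)}) u x ∈ p.support ∧
        proj (G.deleteEdges {s(u,v)}) v x ∈ q.support) ∧
      (Even k ↔ ((G.deleteEdges {s(u,v)}).Reachable u a ↔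
        (G.deleteEdges {s(u,v)}).Reachable u b)) ∧
      (k = 0 → s(u,v) ∉ w.edges) := by
  set G' := G.deleteEdges {s(u,v)} with hG'
  have hdis : ∀ x, G'.Reachable u x → G'.Reachable v x → False :=
    fun x h1 h2 => hnr (h1.trans h2.symm)
  have hnr' : ¬ G'.Reachable v u := fun h => hnr h.symm
  induction w with
  | nil =>
    refine ⟨Walk.nil, Walk.nil, 0, by simp, ?_, by simp, by simp⟩
    intro x hx
    rw [Walk.support_nil, List.mem_singleton] at hx
    subst hx
    simp
  | @cons a c b h w ih =>
    obtain ⟨p, q, k, hlen, hsup, hpar, hzero⟩ := ih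
    by_cases he : s(a,c) = s(u,v)
    · -- the crossing edge
      have hac : (a = u ∧ c = v) ∨ (a = v ∧ c = u) := Sym2.eq_iff.mp he
      have h1 : proj G' u a = proj G' u c := by
        apply Subtype.ext
        rcases hac with ⟨rfl, rfl⟩ | ⟨rfl, rfl⟩
        · rw [proj_val_pos (Reachable.refl _), proj_val_neg hnr]
        · rw [proj_val_neg hnr, proj_val_pos (Reachable.refl _)]
      have h2 : proj G' v a = proj G' v c := by
        apply Subtype.ext
        rcases hac with ⟨rfl, rfl⟩ | ⟨rfl, rfl⟩
        · rw [proj_val_neg hnr', proj_val_pos (Reachable.refl _)]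
        · rw [proj_val_pos (Reachable.refl _), proj_val_neg hnr']
      have hne : ¬ (G'.Reachable u a ↔ G'.Reachable u c) := by
        rcases hac with ⟨rfl, rfl⟩ | ⟨rfl, rfl⟩
        · exact fun hiff => hnr (hiff.mp (Reachable.refl _))
        · exact fun hiff => hnr (hiff.mpr (Reachable.refl _))
      refine ⟨p.copy h1.symm rfl, q.copy h2.symm rfl, k + 1, ?_, ?_, ?_, ?_⟩
      · simp only [Walk.length_copy, Walk.length_cons]; omega
      · intro x hx
        simp only [Walk.support_cons, List.mem_cons] at hx
        simp only [Walk.support_copy]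
        rcases hx with rfl | hx
        · exact ⟨by rw [h1]; exact (hsup c w.start_mem_support).1,
            by rw [h2]; exact (hsup c w.start_mem_support).2⟩
        · exact hsup x hx
      · rw [Nat.even_add_one, hpar]
        tauto
      · exact fun hk => absurd hk k.succ_ne_zero
    · -- an edge inside one of the components
      have hadj : G'.Adj a c := by
        rw [hG', SimpleGraph.deleteEdges_adj]
        exact ⟨h, by simpa using he⟩
      have hiff : G'.Reachable u a ↔ G'.Reachable u c :=
        ⟨fun r => r.trans ⟨hadj.toWalk⟩, fun r => r.trans ⟨hadj.symm.toWalk⟩⟩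
      have hiffv : G'.Reachable v a ↔ G'.Reachable v c :=
        ⟨fun r => r.trans ⟨hadj.toWalk⟩, fun r => r.trans ⟨hadj.symm.toWalk⟩⟩
      by_cases h1 : G'.Reachable u a
      · have h1c : G'.Reachable u c := hiff.mp h1
        have h2a : ¬ G'.Reachable v a := fun h' => hdis a h1 h'
        have h2c : ¬ G'.Reachable v c := fun h' => hdis c h1c h'
        have hadj' : (G'.induce (G'.connectedComponentMk u).supp).Adj
            (proj G' u a) (proj G' u c) := by
          show G'.Adj (proj G' u a : V) (proj G' u c : V)
          rw [proj_val_pos h1, proj_val_pos h1c]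
          exact hadj
        have h2 : proj G' v a = proj G' v c :=
          Subtype.ext (by rw [proj_val_neg h2a, proj_val_neg h2c])
        refine ⟨Walk.cons hadj' p, q.copy h2.symm rfl, k, ?_, ?_, ?_, ?_⟩
        · simp only [Walk.length_copy, Walk.length_cons]; omega
        · intro x hx
          simp only [Walk.support_cons, List.mem_cons] at hx
          simp only [Walk.support_cons, List.mem_cons, Walk.support_copy]
          rcases hx with rfl | hx
          · exact ⟨Or.inl rfl, by rw [h2]; exact (hsup c w.start_mem_support).2⟩
          · exact ⟨Or.inr (hsup x hx).1, (hsup x hx).2⟩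
        · rw [hpar, hiff]
        · intro hk
          have hm := hzero hk
          simp only [Walk.edges_cons, List.mem_cons]
          push_neg
          exact ⟨fun h' => he h'.symm, hm⟩
      · have h1c : ¬ G'.Reachable u c := fun r => h1 (hiff.mpr r)
        have h2a : G'.Reachable v a := (htot a).resolve_left h1
        have h2c : G'.Reachable v c := hiffv.mp h2a
        have hadj' : (G'.induce (G'.connectedComponentMk v).supp).Adj
            (proj G' v a) (proj G' v c) := by
          show G'.Adj (proj G' v a : V) (proj G' v c : V)
          rw [proj_val_pos h2a, proj_val_pos h2c]
          exact hadj
        have h2 : proj G' u a = proj G' u c :=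
          Subtype.ext (by rw [proj_val_neg h1, proj_val_neg h1c])
        refine ⟨p.copy h2.symm rfl, Walk.cons hadj' q, k, ?_, ?_, ?_, ?_⟩
        · simp only [Walk.length_copy, Walk.length_cons]; omega
        · intro x hx
          simp only [Walk.support_cons, List.mem_cons] at hx
          simp only [Walk.support_cons, List.mem_cons, Walk.support_copy]
          rcases hx with rfl | hx
          · exact ⟨by rw [h2]; exact (hsup c w.start_mem_support).1, Or.inl rfl⟩
          · exact ⟨(hsup x hx).1, Or.inr (hsup x hx).2⟩
        · rw [hpar, hiff]
        · intro hk
          have hm := hzero hk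
          simp only [Walk.edges_cons, List.mem_cons]
          push_neg
          exact ⟨fun h' => he h'.symm, hm⟩

end TspAux

open SimpleGraph TspAux in
/-- If `b = s(u,v)` is a bridge of a connected graph `G`, and `G₁`, `G₂` are the two
connected components of `G − b` (namely the components of `u` and of `v`), then
`tsp(G) = tsp(G₁) + tsp(G₂) + 2`. -/
theorem stmt6 {V : Type*} [Fintype V] (G : SimpleGraph V) (hG : G.Connected)
    (u v : V) (huv : G.Adj u v) (hbridge : G.IsBridge s(u, v)) :
    tsp G =
      tsp ((G.deleteEdges {s(u, v)}).induce
            ((G.deleteEdges {s(u, v)}).connectedComponentMk u).supp) +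
      tsp ((G.deleteEdges {s(u, v)}).induce
            ((G.deleteEdges {s(u, v)}).connectedComponentMk v).supp) + 2 := by
  classical
  set G' := G.deleteEdges {s(u, v)} with hG'
  have hnr : ¬ G'.Reachable u v := isBridge_iff.mp hbridge
  have hnr' : ¬ G'.Reachable v u := fun h => hnr h.symm
  -- every vertex is in one of the two components
  have htot : ∀ x, G'.Reachable u x ∨ G'.Reachable v x := by
    have H : ∀ {a b : V} (w : G.Walk a b),
        (G'.Reachable u a ∨ G'.Reachable v a) →
        (G'.Reachable u b ∨ G'.Reachable v b) := by
      intro a b w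
      induction w with
      | nil => exact id
      | @cons a c b h p ih =>
        intro ha
        apply ih
        by_cases he : s(a,c) = s(u,v)
        · rcases Sym2.eq_iff.mp he with ⟨rfl, rfl⟩ | ⟨rfl, rfl⟩
          · exact Or.inr (Reachable.refl _)
          · exact Or.inl (Reachable.refl _)
        · have hadj : G'.Adj a c := by
            rw [hG', SimpleGraph.deleteEdges_adj]
            exact ⟨h, by simpa using he⟩
          exact ha.imp (fun r => r.trans ⟨hadj.toWalk⟩) (fun r => r.trans ⟨hadj.toWalk⟩)
    intro x
    obtain ⟨w⟩ := hG.preconnected u x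
    exact H w (Or.inl (Reachable.refl _))
  set s₁ := (G'.connectedComponentMk u).supp with hs₁
  set s₂ := (G'.connectedComponentMk v).supp with hs₂
  have hu₁ : u ∈ s₁ := mem_supp_of_reach (Reachable.refl _)
  have hv₂ : v ∈ s₂ := mem_supp_of_reach (Reachable.refl _)
  haveI : Fintype ↥s₁ := Fintype.ofFinite _
  haveI : Fintype ↥s₂ := Fintype.ofFinite _
  haveI : Nonempty ↥s₁ := ⟨⟨u, hu₁⟩⟩
  haveI : Nonempty ↥s₂ := ⟨⟨v, hv₂⟩⟩
  -- the two induced components are connected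
  have key_conn : ∀ (z : V), (G'.induce (G'.connectedComponentMk z).supp).Connected := by
    intro z
    rw [SimpleGraph.connected_iff]
    refine ⟨?_, ⟨⟨z, mem_supp_of_reach (Reachable.refl _)⟩⟩⟩
    rintro ⟨x, hx⟩ ⟨y, hy⟩
    have hrx : G'.Reachable z x := reach_of_mem_supp hx
    have hry : G'.Reachable z y := reach_of_mem_supp hy
    obtain ⟨wxy⟩ := hrx.symm.trans hry
    refine walk_induce wxy hx hy fun t ht => ?_
    exact mem_supp_of_reach (hrx.trans ⟨wxy.takeUntil t ht⟩)
  -- optimal tours of the two components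
  obtain ⟨x₁, t₁, ht₁⟩ := exists_tour (key_conn u)
  obtain ⟨x₂, t₂, ht₂⟩ := exists_tour (key_conn v)
  have hne₁ : {m : ℕ | ∃ (x : ↥s₁) (w : (G'.induce s₁).Walk x x),
      (∀ y : ↥s₁, y ∈ w.support) ∧ w.length = m}.Nonempty :=
    ⟨t₁.length, x₁, t₁, ht₁, rfl⟩
  have hne₂ : {m : ℕ | ∃ (x : ↥s₂) (w : (G'.induce s₂).Walk x x),
      (∀ y : ↥s₂, y ∈ w.support) ∧ w.length = m}.Nonempty :=
    ⟨t₂.length, x₂, t₂, ht₂, rfl⟩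
  obtain ⟨y₁, w₁, hw₁cov, hw₁len⟩ := Nat.sInf_mem hne₁
  obtain ⟨y₂, w₂, hw₂cov, hw₂len⟩ := Nat.sInf_mem hne₂
  -- rotate the tours so they are based at u resp. v
  have hu₁' : (⟨u, hu₁⟩ : ↥s₁) ∈ w₁.support := hw₁cov _
  have hv₂' : (⟨v, hv₂⟩ : ↥s₂) ∈ w₂.support := hw₂cov _
  -- homomorphisms into G
  let f₁ : (G'.induce s₁) →g G :=
    (Hom.ofLE (G.deleteEdges_le _)).comp (Embedding.induce s₁).toHom
  let f₂ : (G'.induce s₂) →g G :=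
    (Hom.ofLE (G.deleteEdges_le _)).comp (Embedding.induce s₂).toHom
  have hf₁ : f₁ ⟨u, hu₁⟩ = u := rfl
  have hf₂ : f₂ ⟨v, hv₂⟩ = v := rfl
  -- the combined tour of G
  let W : G.Walk u u :=
    (((w₁.rotate _ hu₁').map f₁).copy hf₁ hf₁).append
      (Walk.cons huv ((((w₂.rotate _ hv₂').map f₂).copy hf₂ hf₂).append (Walk.cons huv.symm Walk.nil)))
  have hWcov : ∀ y : V, y ∈ W.support := by
    intro y
    unfold W
    rw [Walk.mem_support_append_iff]
    rcases htot y with hy | hy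
    · left
      rw [Walk.support_copy, Walk.support_map, List.mem_map]
      exact ⟨⟨y, mem_supp_of_reach hy⟩,
        (mem_support_rotate w₁ hu₁').mpr (hw₁cov _), rfl⟩
    · right
      rw [Walk.support_cons, List.mem_cons]
      right
      rw [Walk.mem_support_append_iff]
      left
      rw [Walk.support_copy, Walk.support_map, List.mem_map]
      exact ⟨⟨y, mem_supp_of_reach hy⟩,
        (mem_support_rotate w₂ hv₂').mpr (hw₂cov _), rfl⟩
  have hWlen : W.length = w₁.length + w₂.length + 2 := by
    simp only [W, Walk.length_append, Walk.length_cons, Walk.length_map,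
      Walk.length_copy, length_rotate, Walk.length_nil]
    omega
  have hub : tsp G ≤ tsp (G'.induce s₁) + tsp (G'.induce s₂) + 2 := by
    apply Nat.sInf_le
    refine ⟨u, W, hWcov, ?_⟩
    rw [hWlen, hw₁len, hw₂len]
    rfl
  -- lower bound
  have hneG : {m : ℕ | ∃ (x : V) (w : G.Walk x x),
      (∀ y : V, y ∈ w.support) ∧ w.length = m}.Nonempty :=
    ⟨W.length, u, W, hWcov, rfl⟩
  obtain ⟨x, w, hcov, hlen⟩ := Nat.sInf_mem hneG
  obtain ⟨p, q, k, hplen, hpsup, hpar, hzero⟩ := projection hnr htot w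
  have hle₁ : tsp (G'.induce s₁) ≤ p.length := by
    apply Nat.sInf_le
    refine ⟨proj G' u x, p, ?_, rfl⟩
    rintro ⟨z, hz⟩
    have hr : G'.Reachable u z := reach_of_mem_supp hz
    have hmem := (hpsup z (hcov z)).1
    have : proj G' u z = ⟨z, hz⟩ := Subtype.ext (proj_val_pos hr)
    rwa [this] at hmem
  have hle₂ : tsp (G'.induce s₂) ≤ q.length := by
    apply Nat.sInf_le
    refine ⟨proj G' v x, q, ?_, rfl⟩
    rintro ⟨z, hz⟩
    have hr : G'.Reachable v z := reach_of_mem_supp hz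
    have hmem := (hpsup z (hcov z)).2
    have : proj G' v z = ⟨z, hz⟩ := Subtype.ext (proj_val_pos hr)
    rwa [this] at hmem
  have hkeven : Even k := hpar.mpr Iff.rfl
  have hkne : k ≠ 0 := by
    intro hk
    have hmem : ∀ e ∈ w.edges, e ∉ ({s(u,v)} : Set (Sym2 V)) := by
      intro e hein heq
      rw [Set.mem_singleton_iff] at heq
      subst heq
      exact hzero hk hein
    let w' := w.toDeleteEdges {s(u,v)} hmem
    have hsup' : ∀ y : V, y ∈ w'.support := by
      intro y
      have : w'.support = w.support := Walk.support_transfer _ _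
      rw [this]
      exact hcov y
    have h1 : u ∈ w'.support := hsup' u
    have h2 : v ∈ w'.support := hsup' v
    exact hnr ⟨(w'.takeUntil u h1).reverse.append (w'.takeUntil v h2)⟩
  have hk2 : 2 ≤ k := by
    obtain ⟨m, hm⟩ := hkeven
    omega
  have hlb : tsp (G'.induce s₁) + tsp (G'.induce s₂) + 2 ≤ tsp G := by
    calc tsp (G'.induce s₁) + tsp (G'.induce s₂) + 2
        ≤ p.length + q.length + k := by omega
      _ = w.length := hplen
      _ = tsp G := hlen
  exact le_antisymm hub hlb
end

section
/- Let G be a connected simple cubic graph that has a dominating cycle. Then G has a traveling salesman tour of length at most (5/4)·|V(G)|, i.e., tsp(G) ≤ (5/4)·|V(G)|. -/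
open SimpleGraph Walk

/-- In a cycle at `v`, vertex `v` has two distinct neighbors on the cycle. -/
lemma two_nbrs {V : Type*} {G : SimpleGraph V} {v : V} (c : G.Walk v v) (hc : c.IsCycle) :
    ∃ a b : V, G.Adj v a ∧ G.Adj v b ∧ a ∈ c.support ∧ b ∈ c.support ∧ a ≠ b := by
  have hlen : 3 ≤ c.length := hc.three_le_length
  cases c with
  | nil => simp at hlen
  | cons h p =>
    rename_i a
    have hp2 : 2 ≤ p.length := by simpa using hlen
    have hpd : p.darts ≠ [] := by
      intro hcon
      have := p.length_darts
      rw [hcon] at this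
      simp at this
      omega
    set d := p.darts.getLast hpd with hd
    have hdmem : d ∈ p.darts := List.getLast_mem hpd
    have hdsnd : d.snd = v := by rw [hd, p.getLast_darts_eq_lastDart hpd]; rfl
    have hadj2 : G.Adj v d.fst := by
      have := d.adj
      rw [hdsnd] at this
      exact this.symm
    refine ⟨a, d.fst, h, hadj2, ?_, ?_, ?_⟩
    · simp [Walk.support_cons, Walk.start_mem_support]
    · have : d.fst ∈ p.support := Walk.dart_fst_mem_support_of_mem_darts _ hdmem
      simp [Walk.support_cons, this]
    · intro hab
      have hnodup : (Walk.cons h p).edges.Nodup := hc.isTrail.edges_nodup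
      rw [Walk.edges_cons, List.nodup_cons] at hnodup
      apply hnodup.1
      have : d.edge ∈ p.edges := List.mem_map_of_mem hdmem
      have hde : d.edge = s(v, a) := by
        have : d.toProd = (a, v) := by
          ext
          · exact hab.symm
          · exact hdsnd
        rw [SimpleGraph.Dart.edge, this]
        exact Sym2.eq_swap
      rwa [hde] at this

lemma detour {V : Type*} [DecidableEq V] {G : SimpleGraph V} {x v u : V} (w : G.Walk x x)
    (hv : v ∈ w.support) (h : G.Adj v u) :
    ∃ w' : G.Walk x x, w'.length = w.length + 2 ∧ u ∈ w'.support ∧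
      ∀ z ∈ w.support, z ∈ w'.support := by
  refine ⟨(w.takeUntil v hv).append ((Walk.cons h (Walk.cons h.symm Walk.nil)).append
    (w.dropUntil v hv)), ?_, ?_, ?_⟩
  · have hspec := congr_arg Walk.length (w.take_spec hv)
    rw [Walk.length_append] at hspec
    simp [Walk.length_append]
    omega
  · rw [Walk.mem_support_append_iff, Walk.mem_support_append_iff]
    right; left
    simp
  · intro z hz
    rw [← w.take_spec hv, Walk.mem_support_append_iff] at hz
    rw [Walk.mem_support_append_iff, Walk.mem_support_append_iff]
    tauto

lemma extend {V : Type*} [DecidableEq V] {G : SimpleGraph V} {x : V} (c : G.Walk x x)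
    (T : Finset V) (hT : ∀ u ∈ T, ∃ v, v ∈ c.support ∧ G.Adj v u) :
    ∃ w : G.Walk x x, w.length = c.length + 2 * T.card ∧
      (∀ z ∈ c.support, z ∈ w.support) ∧ ∀ z ∈ T, z ∈ w.support := by
  classical
  induction T using Finset.induction_on with
  | empty => exact ⟨c, by simp, fun z hz => hz, by simp⟩
  | @insert u T hu ih =>
    obtain ⟨w, hlen, hsub, hTmem⟩ := ih (fun a ha => hT a (Finset.mem_insert_of_mem ha))
    obtain ⟨v, hvc, hadj⟩ := hT u (Finset.mem_insert_self u T)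
    obtain ⟨w', hlen', humem, hsub'⟩ := detour w (hsub v hvc) hadj
    refine ⟨w', ?_, fun z hz => hsub' z (hsub z hz), ?_⟩
    · rw [hlen', hlen, Finset.card_insert_of_notMem hu]; ring
    · intro z hz
      rcases Finset.mem_insert.mp hz with rfl | hz
      · exact humem
      · exact hsub' z (hTmem z hz)

/-- The degree of a vertex: number of neighbors. -/
noncomputable def degN {V : Type*} (G : SimpleGraph V) (v : V) : ℕ :=
  Nat.card {u : V | G.Adj v u}

/-- A connected simple cubic graph with a dominating cycle has a traveling salesman tour
of length at most (5/4)·|V(G)|. -/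
theorem stmt11 {V : Type*} [Fintype V] (G : SimpleGraph V) (hG : G.Connected)
    (hcubic : ∀ v : V, degN G v = 3)
    (x : V) (c : G.Walk x x) (hcyc : c.IsCycle)
    (hdom : ∀ a b : V, G.Adj a b → a ∈ c.support ∨ b ∈ c.support) :
    (tsp G : ℝ) ≤ (5 / 4 : ℝ) * (Fintype.card V : ℝ) := by
  classical
  -- degrees via neighborFinset
  have hdeg : ∀ v : V, (G.neighborFinset v).card = 3 := by
    intro v
    rw [← hcubic v, degN]
    rw [SimpleGraph.neighborFinset, Set.toFinset_card, Nat.card_eq_fintype_card]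
    rfl
  let N : V → Finset V := fun v => G.neighborFinset v
  have hNdeg : ∀ v : V, (N v).card = 3 := hdeg
  have hNmem : ∀ v z : V, z ∈ N v ↔ G.Adj v z := by
    intro v z
    simp [N]
  set K : Finset V := c.support.toFinset with hK
  set S : Finset V := Kᶜ with hS
  have hlen3 : 3 ≤ c.length := hcyc.three_le_length
  -- K.card = c.length
  have hKcard : K.card = c.length := by
    have hsupp := c.support_eq_cons
    have htne : c.support.tail ≠ [] := by
      intro hcon
      have hx : c.support = [x] := by rw [hsupp, hcon]
      have hnil := SimpleGraph.Walk.nil_iff_support_eq.mpr hx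
      have := SimpleGraph.Walk.nil_iff_length_eq.mp hnil
      omega
    have hxlast : x ∈ c.support.tail := by
      have h1 : c.support.tail.getLast htne = c.support.getLast (by simp) :=
        List.getLast_tail _
      rw [c.getLast_support] at h1
      have := List.getLast_mem htne
      rwa [h1] at this
    have h2 : K = c.support.tail.toFinset := by
      rw [hK]
      conv_lhs => rw [hsupp]
      rw [List.toFinset_cons]
      exact Finset.insert_eq_self.mpr (List.mem_toFinset.mpr hxlast)
    rw [h2, List.toFinset_card_of_nodup hcyc.support_nodup]
    have := c.length_support
    rw [hsupp, List.length_cons] at this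
    omega
  -- every cycle vertex has at most one neighbor off the cycle
  have hone : ∀ v ∈ K, (N v ∩ S).card ≤ 1 := by
    intro v hvK
    have hvsupp : v ∈ c.support := List.mem_toFinset.mp hvK
    obtain ⟨a, b, hva, hvb, has, hbs, hab⟩ := two_nbrs (c.rotate v hvsupp) (hcyc.rotate hvsupp)
    have hrot := c.support_rotate v hvsupp
    have hmemK : ∀ z : V, z ∈ (c.rotate v hvsupp).support → z ∈ K := by
      intro z hz
      rw [(c.rotate v hvsupp).support_eq_cons, List.mem_cons] at hz
      rcases hz with rfl | hz
      · exact List.mem_toFinset.mpr hvsupp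
      · exact List.mem_toFinset.mpr (List.mem_of_mem_tail (hrot.mem_iff.mp hz))
    have haK : a ∈ K := hmemK a has
    have hbK : b ∈ K := hmemK b hbs
    have hsub : ({a, b} : Finset V) ⊆ N v ∩ K := by
      rw [Finset.insert_subset_iff, Finset.singleton_subset_iff]
      exact ⟨Finset.mem_inter.mpr ⟨(hNmem v a).mpr hva, haK⟩,
        Finset.mem_inter.mpr ⟨(hNmem v b).mpr hvb, hbK⟩⟩
    have h2le : 2 ≤ (N v ∩ K).card := by
      calc 2 = ({a, b} : Finset V).card := (Finset.card_pair hab).symm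
        _ ≤ _ := Finset.card_le_card hsub
    have hsd : N v ∩ S = N v \ K := by
      ext z
      simp only [hS, Finset.mem_inter, Finset.mem_compl, Finset.mem_sdiff]
    have := Finset.card_sdiff_add_card_inter (N v) K
    rw [hNdeg v] at this
    rw [hsd]
    omega
  -- off-cycle vertices have all neighbors on the cycle
  have hnsub : ∀ u ∈ S, N u ⊆ K := by
    intro u huS z hz
    have hadj : G.Adj u z := (hNmem u z).mp hz
    rcases hdom u z hadj with hu | hz'
    · exact absurd (List.mem_toFinset.mpr hu) (Finset.mem_compl.mp huS)
    · exact List.mem_toFinset.mpr hz'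
  -- 3 * S.card ≤ K.card
  have hcount : 3 * S.card ≤ K.card := by
    have hdisj : ∀ u ∈ S, ∀ u' ∈ S, u ≠ u' →
        Disjoint (N u) (N u') := by
      intro u hu u' hu' hne
      rw [Finset.disjoint_left]
      intro v hv hv'
      have hvK : v ∈ K := hnsub u hu hv
      have h1 : u ∈ N v ∩ S :=
        Finset.mem_inter.mpr ⟨(hNmem v u).mpr ((hNmem u v).mp hv).symm, hu⟩
      have h2 : u' ∈ N v ∩ S :=
        Finset.mem_inter.mpr ⟨(hNmem v u').mpr ((hNmem u' v).mp hv').symm, hu'⟩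
      have : 2 ≤ (N v ∩ S).card := by
        calc 2 = ({u, u'} : Finset V).card := (Finset.card_pair hne).symm
          _ ≤ _ := Finset.card_le_card (by
            rw [Finset.insert_subset_iff, Finset.singleton_subset_iff]
            exact ⟨h1, h2⟩)
      have := hone v hvK
      omega
    have hbu : (S.biUnion N).card = 3 * S.card := by
      rw [Finset.card_biUnion hdisj]
      rw [Finset.sum_congr rfl (fun u _ => hNdeg u)]
      simp [Nat.mul_comm]
    have hbsub : S.biUnion N ⊆ K :=
      Finset.biUnion_subset.mpr hnsub
    rw [← hbu]
    exact Finset.card_le_card hbsub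
  -- build the tour
  have hT : ∀ u ∈ S, ∃ v, v ∈ c.support ∧ G.Adj v u := by
    intro u huS
    have hne : (N u).Nonempty := by
      rw [← Finset.card_pos, hNdeg u]; omega
    obtain ⟨b, hb⟩ := hne
    exact ⟨b, List.mem_toFinset.mp (hnsub u huS hb), ((hNmem u b).mp hb).symm⟩
  obtain ⟨w, hwlen, hwsub, hwS⟩ := extend c S hT
  have hall : ∀ u : V, u ∈ w.support := by
    intro u
    by_cases hu : u ∈ K
    · exact hwsub u (List.mem_toFinset.mp hu)
    · exact hwS u (Finset.mem_compl.mpr hu)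
  have htsp : tsp G ≤ c.length + 2 * S.card :=
    Nat.sInf_le ⟨x, w, hall, hwlen⟩
  have hcardV : K.card + S.card = Fintype.card V := by
    rw [hS, Finset.card_compl]
    have := Finset.card_le_univ K
    omega
  have hfinal : 4 * tsp G ≤ 5 * Fintype.card V := by omega
  have : (4 : ℝ) * (tsp G : ℝ) ≤ 5 * (Fintype.card V : ℝ) := by
    exact_mod_cast hfinal
  linarith
end
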